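/- Let η be a holomorphic connection on the holomorphic principal H-bundle E_H, and let 𝜂̃ : X × 𝔤 → At_ρ(E_H) be the holomorphic G-connection defined by (x, v) ↦ (η(d'ρ(x, v)), (x, v)). Then η is adapted to 𝜂̃ if and only if i_{d'ρ(x,v)}(𝒦(η)(x)) = 0 for all v ∈ 𝔤 and x ∈ X. In particular, if η is adapted to 𝜂̃ then η is strongly adapted to 𝜂̃. -/
import Mathlib

theorem adapted_to_etaTilde_iff_contraction_vanishes_and_adapted_implies_strongly
    (R : Type) [CommRing R] [Algebra ℂ R]
    (T : Type) [LieRing T] [LieAlgebra ℂ T] [Module R T]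
    (A : Type) [LieRing A] [LieAlgebra ℂ A] [Module R A]
    (adE : Type) [AddCommGroup adE] [Module R adE]
    (𝔤 : Type) [LieRing 𝔤] [LieAlgebra ℂ 𝔤]
    (ι : adE →ₗ[R] A) (dp : A →ₗ[R] T)
    (hι : Function.Injective ι) (hdp : Function.Surjective dp)
    (hexact : ∀ a : A, dp a = 0 ↔ a ∈ LinearMap.range ι)
    (hdp_bracket : ∀ a b : A, dp ⁅a, b⁆ = ⁅dp a, dp b⁆)
    (σ : 𝔤 →ₗ[ℂ] T) (hσ : ∀ v w : 𝔤, σ ⁅v, w⁆ = ⁅σ v, σ w⁆)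
    (η : T →ₗ[R] A) (hη : ∀ t, dp (η t) = t) :
    ((∀ (v : 𝔤) (t : T), ⁅η (σ v), η t⁆ ∈ LinearMap.range η) ↔
        (∀ (v : 𝔤) (t : T), ⁅η (σ v), η t⁆ - η ⁅σ v, t⁆ = 0)) ∧
      ((∀ (v : 𝔤) (t : T), ⁅η (σ v), η t⁆ ∈ LinearMap.range η) →
        ((∀ (v : 𝔤) (t : T), ⁅η (σ v), η t⁆ ∈ LinearMap.range η) ∧
          (∀ v : 𝔤, η (σ v) ∈ LinearMap.range η))) := by
  constructor
  · constructor
    · intro h v t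
      obtain ⟨s, hs⟩ := h v t
      have : s = ⁅σ v, t⁆ := by
        have := congrArg dp hs
        rw [hη, hdp_bracket, hη, hη] at this
        exact this
      rw [← hs, this, sub_self]
    · intro h v t
      have := h v t
      exact ⟨⁅σ v, t⁆, (sub_eq_zero.mp this).symm⟩
  · intro h
    exact ⟨h, fun v => ⟨σ v, rfl⟩⟩
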